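/- Let P_1,…,P_N be orthogonal projections onto subspaces of EuclideanSpace ℝ (Fin n) and let p_1,…,p_N ∈ [1,∞) satisfy Σ_{j=1}^N (1/p_j) P_j ≤ I in the Loewner order. Then for every a with ‖a‖ ≤ 1: Σ_{j=1}^N (1/p_j) ψ(‖P_j a‖) ≤ ψ(‖a‖). -/

import Mathlib

/-- `ψ(x) = (1/2)[(1+x) log(1+x) + (1-x) log(1-x)]`, with the convention `0 · log 0 = 0`
(automatic since `Real.log 0 = 0`). -/
noncomputable def psi (x : ℝ) : ℝ :=
  (1 / 2) * ((1 + x) * Real.log (1 + x) + (1 - x) * Real.log (1 - x))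

open Real Set

/-- auxiliary: derivative of psi -/
noncomputable def Lfun (x : ℝ) : ℝ := (1 / 2) * (Real.log (1 + x) - Real.log (1 - x))

lemma hasDerivAt_log1p {x : ℝ} (hx : -1 < x) :
    HasDerivAt (fun t => Real.log (1 + t)) (1 / (1 + x)) x := by
  have h : HasDerivAt (fun t : ℝ => 1 + t) 1 x := (hasDerivAt_id x).const_add 1
  have := (Real.hasDerivAt_log (by linarith : (1:ℝ) + x ≠ 0)).comp x h
  exact this.congr_deriv (by simp [one_div])

lemma hasDerivAt_log1m {x : ℝ} (hx : x < 1) :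
    HasDerivAt (fun t => Real.log (1 - t)) (-(1 / (1 - x))) x := by
  have h : HasDerivAt (fun t : ℝ => 1 - t) (-1) x := (hasDerivAt_id x).const_sub 1
  have := (Real.hasDerivAt_log (by intro h'; nlinarith : (1:ℝ) - x ≠ 0)).comp x h
  refine this.congr_deriv ?_
  field_simp

lemma hasDerivAt_psi {x : ℝ} (h1 : -1 < x) (h2 : x < 1) :
    HasDerivAt psi (Lfun x) x := by
  have ha := hasDerivAt_log1p h1
  have hb := hasDerivAt_log1m h2
  have h1' : HasDerivAt (fun t : ℝ => 1 + t) 1 x := (hasDerivAt_id x).const_add 1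
  have h2' : HasDerivAt (fun t : ℝ => 1 - t) (-1) x := (hasDerivAt_id x).const_sub 1
  have hA : HasDerivAt (fun t => (1 + t) * Real.log (1 + t)) (Real.log (1 + x) + 1) x := by
    have := h1'.mul ha
    refine this.congr_deriv ?_
    have : (1:ℝ) + x ≠ 0 := by linarith
    field_simp
  have hB : HasDerivAt (fun t => (1 - t) * Real.log (1 - t)) (-Real.log (1 - x) - 1) x := by
    have := h2'.mul hb
    refine this.congr_deriv ?_
    have : (1:ℝ) - x ≠ 0 := by intro h'; nlinarith
    field_simp
    ring
  have hC := (hA.add hB).const_mul (1/2 : ℝ)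
  have he : Lfun x = 1/2 * ((Real.log (1 + x) + 1) + (-Real.log (1 - x) - 1)) := by
    unfold Lfun; ring
  rw [he]
  exact hC

lemma hasDerivAt_Lfun {x : ℝ} (h1 : -1 < x) (h2 : x < 1) :
    HasDerivAt Lfun (1 / (1 - x ^ 2)) x := by
  have := ((hasDerivAt_log1p h1).sub (hasDerivAt_log1m h2)).const_mul (1/2 : ℝ)
  refine this.congr_deriv ?_
  have ha : (1:ℝ) + x ≠ 0 := by linarith
  have hb : (1:ℝ) - x ≠ 0 := by intro h'; nlinarith
  have hc : (1:ℝ) - x ^ 2 ≠ 0 := by intro h'; nlinarith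
  field_simp
  ring

lemma Lfun_zero : Lfun 0 = 0 := by simp [Lfun]

lemma psi_zero : psi 0 = 0 := by simp [psi]

lemma key1 {x : ℝ} (h0 : 0 ≤ x) (h1 : x < 1) : Lfun x ≤ x / (1 - x ^ 2) := by
  set k : ℝ → ℝ := fun t => t / (1 - t ^ 2) - Lfun t with hk
  have hder : ∀ t ∈ Ioo (-1 : ℝ) 1, HasDerivAt k (2 * t ^ 2 / (1 - t ^ 2) ^ 2) t := by
    intro t ht
    obtain ⟨ht1, ht2⟩ := ht
    have hne : (1 : ℝ) - t ^ 2 ≠ 0 := by intro h'; nlinarith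
    have hd0 : HasDerivAt (fun s : ℝ => 1 - s ^ 2) (-(2 * t ^ 1)) t := by
      simpa using (hasDerivAt_pow 2 t).const_sub 1
    have hd1 := (hasDerivAt_id t).div hd0 hne
    have := hd1.sub (hasDerivAt_Lfun ht1 ht2)
    refine this.congr_deriv ?_
    simp only [id_eq]
    field_simp
    ring
  have hmono : MonotoneOn k (Ico 0 1) := by
    apply monotoneOn_of_deriv_nonneg (convex_Ico 0 1)
    · intro t ht
      exact (hder t ⟨by linarith [ht.1], ht.2⟩).continuousAt.continuousWithinAt
    · intro t ht
      rw [interior_Ico] at ht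
      exact (hder t ⟨by linarith [ht.1], ht.2⟩).differentiableAt.differentiableWithinAt
    · intro t ht
      rw [interior_Ico] at ht
      rw [(hder t ⟨by linarith [ht.1], ht.2⟩).deriv]
      positivity
  have h := hmono (left_mem_Ico.mpr one_pos) ⟨h0, h1⟩ h0
  have hk0 : k 0 = 0 := by simp [hk, Lfun]
  rw [hk0] at h
  simp only [hk] at h
  linarith

lemma key2 {x : ℝ} (h0 : 0 ≤ x) (h1 : x < 1) : 2 * psi x ≤ x * Lfun x := by
  set h : ℝ → ℝ := fun t => t * Lfun t - 2 * psi t with hh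
  have hder : ∀ t ∈ Ioo (-1 : ℝ) 1, HasDerivAt h (t / (1 - t ^ 2) - Lfun t) t := by
    intro t ht
    obtain ⟨ht1, ht2⟩ := ht
    have hd1 := (hasDerivAt_id t).mul (hasDerivAt_Lfun ht1 ht2)
    have hd2 := (hasDerivAt_psi ht1 ht2).const_mul (2 : ℝ)
    have := hd1.sub hd2
    refine this.congr_deriv ?_
    simp only [id_eq]
    ring
  have hmono : MonotoneOn h (Ico 0 1) := by
    apply monotoneOn_of_deriv_nonneg (convex_Ico 0 1)
    · intro t ht
      exact (hder t ⟨by linarith [ht.1], ht.2⟩).continuousAt.continuousWithinAt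
    · intro t ht
      rw [interior_Ico] at ht
      exact (hder t ⟨by linarith [ht.1], ht.2⟩).differentiableAt.differentiableWithinAt
    · intro t ht
      rw [interior_Ico] at ht
      rw [(hder t ⟨by linarith [ht.1], ht.2⟩).deriv]
      have := key1 (le_of_lt ht.1) ht.2
      linarith
  have hle := hmono (left_mem_Ico.mpr one_pos) ⟨h0, h1⟩ h0
  have h0' : h 0 = 0 := by simp [hh, Lfun, psi_zero]
  rw [h0'] at hle
  simp only [hh] at hle
  linarith

lemma continuous_psi : Continuous psi := by
  have h1 : Continuous fun x : ℝ => (1 + x) * Real.log (1 + x) :=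
    Real.continuous_mul_log.comp (continuous_const.add continuous_id)
  have h2 : Continuous fun x : ℝ => (1 - x) * Real.log (1 - x) :=
    Real.continuous_mul_log.comp (continuous_const.sub continuous_id)
  exact continuous_const.mul (h1.add h2)

lemma key3 {x t : ℝ} (hx : 0 ≤ x) (hxt : x ≤ t) (ht : t ≤ 1) :
    t ^ 2 * psi x ≤ x ^ 2 * psi t := by
  rcases eq_or_lt_of_le hx with hx0 | hxpos
  · rw [← hx0, psi_zero]; simp
  set g : ℝ → ℝ := fun s => psi s / s ^ 2 with hg
  have hmono : MonotoneOn g (Ioc 0 1) := by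
    apply monotoneOn_of_deriv_nonneg (convex_Ioc 0 1)
    · exact ContinuousOn.div continuous_psi.continuousOn (continuous_pow 2).continuousOn
        (fun s hs => pow_ne_zero _ (ne_of_gt hs.1))
    · intro s hs
      rw [interior_Ioc] at hs
      have hne : s ^ 2 ≠ 0 := pow_ne_zero _ (ne_of_gt hs.1)
      exact ((hasDerivAt_psi (by linarith [hs.1]) hs.2).div (hasDerivAt_pow 2 s)
        hne).differentiableAt.differentiableWithinAt
    · intro s hs
      rw [interior_Ioc] at hs
      have hne : s ^ 2 ≠ 0 := pow_ne_zero _ (ne_of_gt hs.1)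
      have hd := (hasDerivAt_psi (by linarith [hs.1]) hs.2).div (hasDerivAt_pow 2 s) hne
      rw [show deriv g s = _ from hd.deriv]
      have hnum : 0 ≤ Lfun s * s ^ 2 - psi s * (↑2 * s ^ 1) := by
        have := key2 (le_of_lt hs.1) hs.2
        nlinarith [hs.1]
      exact div_nonneg hnum (by positivity)
  have htpos : 0 < t := lt_of_lt_of_le hxpos hxt
  have h := hmono ⟨hxpos, le_trans hxt ht⟩ ⟨htpos, ht⟩ hxt
  simp only [hg] at h
  rw [div_le_div_iff₀ (by positivity) (by positivity)] at h
  linear_combination h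

lemma psi_nonneg {x : ℝ} (h0 : 0 ≤ x) (h1 : x ≤ 1) : 0 ≤ psi x := by
  rcases eq_or_lt_of_le h1 with h1' | h1'
  · subst h1'
    simp [psi]
    positivity
  · have p1 : (0:ℝ) < 1 + x := by linarith
    have p2 : (0:ℝ) < 1 - x := by linarith
    have e1 : (1 + x) * (1 - (1 + x)⁻¹) = x := by field_simp; ring
    have e2 : (1 - x) * (1 - (1 - x)⁻¹) = -x := by field_simp; ring
    have i1 := mul_le_mul_of_nonneg_left (Real.one_sub_inv_le_log_of_pos p1) (le_of_lt p1)
    have i2 := mul_le_mul_of_nonneg_left (Real.one_sub_inv_le_log_of_pos p2) (le_of_lt p2)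
    unfold psi
    nlinarith

/-- If the orthogonal projections `P_j` onto the subspaces `V_j` satisfy
`Σ_j (1/p_j) P_j ≤ I` in the Loewner order, then for every `a` with `‖a‖ ≤ 1`,
`Σ_j (1/p_j) ψ(‖P_j a‖) ≤ ψ(‖a‖)`. -/
theorem psi_subadditivity {n N : ℕ}
    (V : Fin N → Submodule ℝ (EuclideanSpace ℝ (Fin n)))
    (p : Fin N → ℝ) (hp : ∀ j, 1 ≤ p j)
    (hLoewner : ∀ x : EuclideanSpace ℝ (Fin n),
      ∑ j, (1 / p j) * ‖(Submodule.orthogonalProjectionOnto (V j) x : EuclideanSpace ℝ (Fin n))‖ ^ 2 ≤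
        ‖x‖ ^ 2)
    (a : EuclideanSpace ℝ (Fin n)) (ha : ‖a‖ ≤ 1) :
    ∑ j, (1 / p j) * psi ‖(Submodule.orthogonalProjectionOnto (V j) a : EuclideanSpace ℝ (Fin n))‖ ≤
      psi ‖a‖ := by
  by_cases htz : ‖a‖ = 0
  · have ha0 : a = 0 := norm_eq_zero.mp htz
    subst ha0
    simp [psi_zero]
  have htpos : 0 < ‖a‖ := lt_of_le_of_ne (norm_nonneg a) (Ne.symm htz)
  have hproj : ∀ j, ‖(Submodule.orthogonalProjectionOnto (V j) a : EuclideanSpace ℝ (Fin n))‖ ≤ ‖a‖ := by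
    intro j
    have h1 := (Submodule.orthogonalProjectionOnto (V j)).le_opNorm a
    have h2 := Submodule.orthogonalProjectionOnto_norm_le (V j)
    have h3 : ‖(Submodule.orthogonalProjectionOnto (V j) a : EuclideanSpace ℝ (Fin n))‖
        = ‖Submodule.orthogonalProjectionOnto (V j) a‖ := rfl
    rw [h3]
    calc ‖Submodule.orthogonalProjectionOnto (V j) a‖ ≤ ‖Submodule.orthogonalProjectionOnto (V j)‖ * ‖a‖ := h1
      _ ≤ 1 * ‖a‖ := by
          exact mul_le_mul_of_nonneg_right h2 (norm_nonneg a)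
      _ = ‖a‖ := one_mul _
  have hpsin : 0 ≤ psi ‖a‖ := psi_nonneg (norm_nonneg a) ha
  have hstep : ∀ j ∈ Finset.univ, (1 / p j) *
      psi ‖(Submodule.orthogonalProjectionOnto (V j) a : EuclideanSpace ℝ (Fin n))‖ ≤
      (1 / p j) * ‖(Submodule.orthogonalProjectionOnto (V j) a : EuclideanSpace ℝ (Fin n))‖ ^ 2 *
        (psi ‖a‖ / ‖a‖ ^ 2) := by
    intro j _
    have hc : 0 ≤ 1 / p j := div_nonneg zero_le_one (le_trans zero_le_one (hp j))
    have hk := key3 (norm_nonneg _) (hproj j) ha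
    have : psi ‖(Submodule.orthogonalProjectionOnto (V j) a : EuclideanSpace ℝ (Fin n))‖ ≤
        ‖(Submodule.orthogonalProjectionOnto (V j) a : EuclideanSpace ℝ (Fin n))‖ ^ 2 *
          (psi ‖a‖ / ‖a‖ ^ 2) := by
      rw [mul_div_assoc', le_div_iff₀ (pow_pos htpos 2), mul_comm]
      exact hk
    calc (1 / p j) * psi ‖(Submodule.orthogonalProjectionOnto (V j) a : EuclideanSpace ℝ (Fin n))‖
        ≤ (1 / p j) * (‖(Submodule.orthogonalProjectionOnto (V j) a : EuclideanSpace ℝ (Fin n))‖ ^ 2 *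
          (psi ‖a‖ / ‖a‖ ^ 2)) := mul_le_mul_of_nonneg_left this hc
      _ = (1 / p j) * ‖(Submodule.orthogonalProjectionOnto (V j) a : EuclideanSpace ℝ (Fin n))‖ ^ 2 *
          (psi ‖a‖ / ‖a‖ ^ 2) := by ring
  calc ∑ j, (1 / p j) * psi ‖(Submodule.orthogonalProjectionOnto (V j) a : EuclideanSpace ℝ (Fin n))‖
      ≤ ∑ j, (1 / p j) * ‖(Submodule.orthogonalProjectionOnto (V j) a : EuclideanSpace ℝ (Fin n))‖ ^ 2 *
          (psi ‖a‖ / ‖a‖ ^ 2) := Finset.sum_le_sum hstep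
    _ = (∑ j, (1 / p j) * ‖(Submodule.orthogonalProjectionOnto (V j) a : EuclideanSpace ℝ (Fin n))‖ ^ 2) *
          (psi ‖a‖ / ‖a‖ ^ 2) := by rw [← Finset.sum_mul]
    _ ≤ ‖a‖ ^ 2 * (psi ‖a‖ / ‖a‖ ^ 2) := by
        exact mul_le_mul_of_nonneg_right (hLoewner a) (by positivity)
    _ = psi ‖a‖ := by field_simp
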